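/- arXiv:1403.6817 — 2 statements merged into one kernel-verified Lean document; each statement's English description precedes it below -/
import Mathlib

section
/- The elements Y_i = y_i − (ζt_i/(ζ−1)) y_{i+1}⁻¹ g_i of ℂ[y₁^±,…,y_n^±]#_αG (for i = 1,…,n, subscripts mod n) satisfy Y_i Y_{i+1} − Y_{i+1} Y_i = t_i g_i for all i, and Y_i Y_j − Y_j Y_i = 0 for all i, j with |i−j| ∉ {1, n−1}. -/
/-!
Common setup for the twisted graded Hecke algebra associated to the homocyclic
group `G ≅ (ℤ/ℓℤ)^{n-1}` (Gan–Highfield, "Center of twisted graded Hecke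
algebras for homocyclic groups").

All indices are 0-based: the paper's `x_i, g_i, t_i, τ_i` (for `i = 1, …, n`)
correspond to index `i - 1 : Fin n` here; subscripts are taken mod `n` via the
(wrap-around) addition of `Fin n`.
-/

noncomputable section

namespace TGHA

/-- `ζ` raised to an exponent in `ZMod ℓ` (representative taken in `{0, …, ℓ-1}`). -/
def zp (ℓ : ℕ) (ζ : ℂ) (z : ZMod ℓ) : ℂ := ζ ^ z.val

/-- Given the vector `a` of diagonal exponents of a group element
`g = diag(ζ^{a 0}, …, ζ^{a (n-1)})`, `pS n ℓ a k` is the exponent `i_k` of `g_k` when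
`g` is written as `g₁^{i₁} ⋯ g_{n-1}^{i_{n-1}}`, namely the partial sum `a 0 + ⋯ + a (k-1)`. -/
def pS (n ℓ : ℕ) [NeZero n] (a : Fin n → ZMod ℓ) (k : ℕ) : ZMod ℓ :=
  ∑ m ∈ Finset.range k, a (Fin.ofNat n m)

/-- The 2-cocycle `α : G × G → ℂˣ`,
`α(g₁^{i₁}⋯g_{n-1}^{i_{n-1}}, g₁^{j₁}⋯g_{n-1}^{j_{n-1}}) = ζ^{-i₁j₂ - i₂j₃ - ⋯ - i_{n-2}j_{n-1}}`,
expressed in terms of the vectors of diagonal exponents of the two group elements. -/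
def coc (n ℓ : ℕ) [NeZero n] (ζ : ℂ) (a b : Fin n → ZMod ℓ) : ℂ :=
  zp ℓ ζ (-∑ k ∈ Finset.Icc 1 (n - 2), pS n ℓ a k * pS n ℓ b (k + 1))

/-- The homocyclic group `G`: diagonal matrices `g = diag(ζ^{a 0}, …, ζ^{a (n-1)})` in
`SL_n(ℂ)` with `g^ℓ = 1`, identified with their vectors `a` of exponents; the condition
`det g = 1` is `∑ i, a i = 0`. Written additively. -/
def Gsub (n ℓ : ℕ) : AddSubgroup (Fin n → ZMod ℓ) where
  carrier := {a | ∑ i, a i = 0}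
  zero_mem' := by simp
  add_mem' := by
    intro a b ha hb
    simp only [Set.mem_setOf_eq] at *
    simp [Finset.sum_add_distrib, ha, hb]
  neg_mem' := by
    intro a ha
    simp only [Set.mem_setOf_eq] at *
    simp [ha]

abbrev G (n ℓ : ℕ) := ↥(Gsub n ℓ)

/-- The vector of diagonal exponents of the generator `g_i`
(`g_i x_i = ζ x_i`, `g_i x_{i+1} = ζ⁻¹ x_{i+1}`, `g_i x_j = x_j` otherwise). -/
def gvec (n ℓ : ℕ) [NeZero n] (i : Fin n) : Fin n → ZMod ℓ :=
  Pi.single i 1 - Pi.single (i + 1) 1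

lemma gvec_mem (n ℓ : ℕ) [NeZero n] (i : Fin n) : gvec n ℓ i ∈ Gsub n ℓ := by
  show ∑ j, gvec n ℓ i j = 0
  simp [gvec, Finset.sum_sub_distrib]

/-- The generator `g_i` as an element of `G`. -/
def gelt (n ℓ : ℕ) [NeZero n] (i : Fin n) : G n ℓ := ⟨gvec n ℓ i, gvec_mem n ℓ i⟩

/-- The defining relations of the twisted graded Hecke algebra `H`, as a quotient of the
free algebra on generators `x_i` (`Sum.inl i`) and `u_g`, `g ∈ G` (`Sum.inr g`): the
relations `u_g u_h = α(g,h) u_{gh}`, `u_1 = 1`, `u_g x_i = ζ^{a_i} x_i u_g` present the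
crossed product `TV #_α G`, and the last two relations are the Hecke relations
`x_i x_{i+1} - x_{i+1} x_i = t_i g_i` and `x_i x_j = x_j x_i` for `|i - j| ∉ {1, n-1}`. -/
inductive Rel (n ℓ : ℕ) [NeZero n] (ζ : ℂ) (t : Fin n → ℂ) :
    FreeAlgebra ℂ (Fin n ⊕ G n ℓ) → FreeAlgebra ℂ (Fin n ⊕ G n ℓ) → Prop
  | grp (g h : G n ℓ) :
      Rel n ℓ ζ t (FreeAlgebra.ι ℂ (Sum.inr g) * FreeAlgebra.ι ℂ (Sum.inr h))
        (coc n ℓ ζ g.1 h.1 • FreeAlgebra.ι ℂ (Sum.inr (g + h)))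
  | one : Rel n ℓ ζ t (FreeAlgebra.ι ℂ (Sum.inr (0 : G n ℓ))) 1
  | gx (g : G n ℓ) (i : Fin n) :
      Rel n ℓ ζ t (FreeAlgebra.ι ℂ (Sum.inr g) * FreeAlgebra.ι ℂ (Sum.inl i))
        (zp ℓ ζ (g.1 i) • (FreeAlgebra.ι ℂ (Sum.inl i) * FreeAlgebra.ι ℂ (Sum.inr g)))
  | hecke (i : Fin n) :
      Rel n ℓ ζ t
        (FreeAlgebra.ι ℂ (Sum.inl i) * FreeAlgebra.ι ℂ (Sum.inl (i + 1)) -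
          FreeAlgebra.ι ℂ (Sum.inl (i + 1)) * FreeAlgebra.ι ℂ (Sum.inl i))
        (t i • FreeAlgebra.ι ℂ (Sum.inr (gelt n ℓ i)))
  | commx (i j : Fin n) (h₁ : j ≠ i + 1) (h₂ : i ≠ j + 1) :
      Rel n ℓ ζ t (FreeAlgebra.ι ℂ (Sum.inl i) * FreeAlgebra.ι ℂ (Sum.inl j))
        (FreeAlgebra.ι ℂ (Sum.inl j) * FreeAlgebra.ι ℂ (Sum.inl i))

/-- The twisted graded Hecke algebra `H`. -/
abbrev H (n ℓ : ℕ) [NeZero n] (ζ : ℂ) (t : Fin n → ℂ) := RingQuot (Rel n ℓ ζ t)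

/-- The image of `x_i` in `H`. -/
def xx (n ℓ : ℕ) [NeZero n] (ζ : ℂ) (t : Fin n → ℂ) (i : Fin n) : H n ℓ ζ t :=
  RingQuot.mkAlgHom ℂ (Rel n ℓ ζ t) (FreeAlgebra.ι ℂ (Sum.inl i))

/-- The image of `g ∈ G` in `H`. -/
def ug (n ℓ : ℕ) [NeZero n] (ζ : ℂ) (t : Fin n → ℂ) (g : G n ℓ) : H n ℓ ζ t :=
  RingQuot.mkAlgHom ℂ (Rel n ℓ ζ t) (FreeAlgebra.ι ℂ (Sum.inr g))

/-- Index set for the basis `y^p u_g` of the crossed product `ℂ[y₁^±,…,y_n^±] #_α G`. -/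
abbrev M (n ℓ : ℕ) := (Fin n → ℤ) × G n ℓ

/-- `χ(g, p)`: the scalar by which `g = diag(ζ^{a 0}, …)` acts on the Laurent monomial `y^p`;
for `g = g_i` it is `ζ^{p_i - p_{i+1}}`. -/
def chi (n ℓ : ℕ) [NeZero n] (ζ : ℂ) (a : Fin n → ZMod ℓ) (p : Fin n → ℤ) : ℂ :=
  zp ℓ ζ (∑ j, a j * (p j : ZMod ℓ))

/-- Structure constants of the crossed product `ℂ[y₁^±,…,y_n^±] #_α G` with respect to its
basis: `(y^p u_g) (y^q u_h) = α(g,h) χ(g,q) y^{p+q} u_{gh}`. -/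
def sigma (n ℓ : ℕ) [NeZero n] (ζ : ℂ) (a b : M n ℓ) : ℂ :=
  coc n ℓ ζ a.2.1 b.2.1 * chi n ℓ ζ a.2.1 b.1

/-- The basis element `y^p u_g` (`a = (p, g)`) of the crossed product
`ℂ[y₁^±,…,y_n^±] #_α G`, realized faithfully as the operator of left multiplication by it
on the underlying vector space of the crossed product. -/
def Top (n ℓ : ℕ) [NeZero n] (ζ : ℂ) (a : M n ℓ) : Module.End ℂ (M n ℓ →₀ ℂ) :=
  Finsupp.lsum ℂ fun b => sigma n ℓ ζ a b • Finsupp.lsingle (a + b)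

/-- The algebra containing (the left regular realization of) the crossed product
`ℂ[y₁^±,…,y_n^±] #_α G`. -/
abbrev A (n ℓ : ℕ) := Module.End ℂ (M n ℓ →₀ ℂ)

/-- The element `u_g`, `g ∈ G`, of the crossed product. -/
def Uy (n ℓ : ℕ) [NeZero n] (ζ : ℂ) (g : G n ℓ) : A n ℓ := Top n ℓ ζ (0, g)

/-- The element `y_i` of the crossed product. -/
def Ygen (n ℓ : ℕ) [NeZero n] (ζ : ℂ) (i : Fin n) : A n ℓ := Top n ℓ ζ (Pi.single i 1, 0)

/-- The element `y_i⁻¹` of the crossed product. -/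
def Yinv (n ℓ : ℕ) [NeZero n] (ζ : ℂ) (i : Fin n) : A n ℓ := Top n ℓ ζ (-Pi.single i 1, 0)

/-- `τ_i = t_i/(ζ-1)` for `i = 1, …, n-1` and `τ_n = ζ t_n/(ζ - 1)`. -/
def tau (n : ℕ) (ζ : ℂ) (t : Fin n → ℂ) (i : Fin n) : ℂ :=
  if (i : ℕ) = n - 1 then ζ * t i / (ζ - 1) else t i / (ζ - 1)

/-- `τ̃_i = τ_i^ℓ` for `i = 1, …, n-1` and `τ̃_n = (-1)^{n(ℓ-1)} τ_n^ℓ`. -/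
def taut (n ℓ : ℕ) (ζ : ℂ) (t : Fin n → ℂ) (i : Fin n) : ℂ :=
  if (i : ℕ) = n - 1 then (-1) ^ (n * (ℓ - 1)) * tau n ζ t i ^ ℓ else tau n ζ t i ^ ℓ

/-- The index set `J`: subsets `{i₁ < ⋯ < i_k}` of `{1, …, n}` with
`|i_r - i_s| ∉ {1, n-1}`, i.e. containing no pair of (cyclically) adjacent indices. -/
def Jset (n : ℕ) [NeZero n] : Finset (Finset (Fin n)) :=
  Finset.univ.filter fun S => ∀ i ∈ S, ∀ j ∈ S, j ≠ i + 1

/-- The exponent vector `δ - ε_{i₁} - ⋯ - ε_{i_k}` for `S = {i₁, …, i_k} ∈ J`: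
the entry at `j` is `0` if some `ε_i`, `i ∈ S`, covers position `j` (i.e. `j ∈ S` or
`j - 1 ∈ S` cyclically) and `1` otherwise. -/
def expS (n : ℕ) [NeZero n] (S : Finset (Fin n)) (j : Fin n) : ℕ :=
  if j ∈ S ∨ j - 1 ∈ S then 0 else 1

/-- The ordered monomial `x₁^{p₁} ⋯ x_n^{p_n} ∈ H`. -/
def xpow (n ℓ : ℕ) [NeZero n] (ζ : ℂ) (t : Fin n → ℂ) (p : Fin n → ℕ) : H n ℓ ζ t :=
  ((List.finRange n).map fun j => xx n ℓ ζ t j ^ p j).prod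

/-- The product `g_{i₁} * ⋯ * g_{i_k} ∈ H` over `S = {i₁ < ⋯ < i_k}` (in increasing
order); since `u_g u_h = α(g,h) u_{gh}` holds in `H`, this is the `*`-product. -/
def gprodS (n ℓ : ℕ) [NeZero n] (ζ : ℂ) (t : Fin n → ℂ) (S : Finset (Fin n)) :
    H n ℓ ζ t :=
  ((S.sort (· ≤ ·)).map fun i => ug n ℓ ζ t (gelt n ℓ i)).prod

/-- The element `w = Σ_{{i₁<⋯<i_k} ∈ J} τ_{i₁} ⋯ τ_{i_k} x^{δ-ε_{i₁}-⋯-ε_{i_k}}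
g_{i₁} * ⋯ * g_{i_k}` of `H`. -/
def w (n ℓ : ℕ) [NeZero n] (ζ : ℂ) (t : Fin n → ℂ) : H n ℓ ζ t :=
  ∑ S ∈ Jset n, (∏ i ∈ S, tau n ζ t i) • (xpow n ℓ ζ t (expS n S) * gprodS n ℓ ζ t S)

/-- `ν_r = (-1)^r (ℓ/(ℓ-r)) C(ℓ-r, r)`. -/
def nu (ℓ r : ℕ) : ℂ := (-1) ^ r * ((ℓ : ℂ) / ((ℓ : ℂ) - (r : ℂ))) * (Nat.choose (ℓ - r) r : ℂ)

/-- The polynomial `F` in the variables `a_i = X (Sum.inl i)` and `b = X (Sum.inr ())`. -/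
def Fpoly (n ℓ : ℕ) [NeZero n] (ζ : ℂ) (t : Fin n → ℂ) : MvPolynomial (Fin n ⊕ Unit) ℂ :=
  (∑ S ∈ Jset n, (∏ i ∈ S, taut n ℓ ζ t i) •
      ∏ j : Fin n, MvPolynomial.X (Sum.inl j) ^ expS n S j) -
    ∑ r ∈ Finset.range (ℓ / 2 + 1),
      ((-1) ^ (n * r) * ζ ^ ((n - 2) * r) * nu ℓ r * (∏ i : Fin n, tau n ζ t i) ^ r) •
        MvPolynomial.X (Sum.inr ()) ^ (ℓ - 2 * r)

end TGHA

namespace TGHA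

/-- The element `Y_i = y_i - (ζ t_i/(ζ-1)) y_{i+1}⁻¹ g_i` of `ℂ[y₁^±,…,y_n^±] #_α G`. -/
def Yfull (n ℓ : ℕ) [NeZero n] (ζ : ℂ) (t : Fin n → ℂ) (i : Fin n) : A n ℓ :=
  Ygen n ℓ ζ i - (ζ * t i / (ζ - 1)) • (Yinv n ℓ ζ (i + 1) * Uy n ℓ ζ (gelt n ℓ i))

end TGHA


namespace TGHA

section Aux

open Fin.NatCast

variable (n ℓ : ℕ) [NeZero n] [NeZero ℓ] (ζ : ℂ)

lemma zp_zero : zp ℓ ζ 0 = 1 := by simp [zp]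

lemma zp_add (h1 : ζ ^ ℓ = 1) (z w : ZMod ℓ) :
    zp ℓ ζ (z + w) = zp ℓ ζ z * zp ℓ ζ w := by
  unfold zp
  rw [← pow_add, ZMod.val_add]
  conv_rhs => rw [← Nat.mod_add_div (z.val + w.val) ℓ]
  rw [pow_add, pow_mul, h1, one_pow, mul_one]

lemma pS_add (a b : Fin n → ZMod ℓ) (k : ℕ) :
    pS n ℓ (a + b) k = pS n ℓ a k + pS n ℓ b k := by
  simp [pS, Finset.sum_add_distrib]

/-- The exponent of `ζ` in `sigma`. -/
def ex (x y : M n ℓ) : ZMod ℓ :=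
  -∑ k ∈ Finset.Icc 1 (n - 2), pS n ℓ x.2.1 k * pS n ℓ y.2.1 (k + 1) +
    ∑ j, x.2.1 j * ((y.1 j : ℤ) : ZMod ℓ)

lemma sigma_eq_zp (h1 : ζ ^ ℓ = 1) (x y : M n ℓ) :
    sigma n ℓ ζ x y = zp ℓ ζ (ex n ℓ x y) := by
  rw [sigma, coc, chi, ex, zp_add ℓ ζ h1]

lemma ex_cocycle (x y z : M n ℓ) :
    ex n ℓ y z + ex n ℓ x (y + z) = ex n ℓ x y + ex n ℓ (x + y) z := by
  simp only [ex, Prod.fst_add, Prod.snd_add, AddSubgroup.coe_add, pS_add, Pi.add_apply,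
    Int.cast_add, mul_add, add_mul, Finset.sum_add_distrib]
  ring

lemma sigma_mul (h1 : ζ ^ ℓ = 1) (a b c : M n ℓ) :
    sigma n ℓ ζ b c * sigma n ℓ ζ a (b + c) = sigma n ℓ ζ a b * sigma n ℓ ζ (a + b) c := by
  rw [sigma_eq_zp n ℓ ζ h1, sigma_eq_zp n ℓ ζ h1, sigma_eq_zp n ℓ ζ h1, sigma_eq_zp n ℓ ζ h1,
    ← zp_add ℓ ζ h1, ← zp_add ℓ ζ h1, ex_cocycle]

lemma Top_mul (h1 : ζ ^ ℓ = 1) (a b : M n ℓ) :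
    Top n ℓ ζ a * Top n ℓ ζ b = sigma n ℓ ζ a b • Top n ℓ ζ (a + b) := by
  apply Finsupp.lhom_ext
  intro c x
  simp only [Module.End.mul_apply, LinearMap.smul_apply, Top, Finsupp.lsum_single,
    Finsupp.lsingle_apply, map_smul, smul_smul]
  rw [sigma_mul n ℓ ζ h1, add_assoc]

lemma sigma_fst (h1 : ζ ^ ℓ = 1) (p : Fin n → ℤ) (y : M n ℓ) :
    sigma n ℓ ζ ((p, 0) : M n ℓ) y = 1 := by
  simp [sigma, coc, chi, pS, zp]

lemma pS_gvec_n (i : Fin n) : pS n ℓ (gvec n ℓ i) n = 0 := by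
  have h : pS n ℓ (gvec n ℓ i) n = ∑ m : Fin n, gvec n ℓ i m := by
    rw [pS]; simp only [Fin.ofNat_eq_cast]; rw [← Fin.sum_univ_eq_sum_range (fun m => gvec n ℓ i (m : Fin n)) n]
    exact Finset.sum_congr rfl fun x _ => by rw [Fin.cast_val_eq_self]
  rw [h]; exact gvec_mem n ℓ i

lemma Bil_ext (hn : 3 ≤ n) (i j : Fin n) :
    ∑ k ∈ Finset.Icc 1 (n - 2), pS n ℓ (gvec n ℓ i) k * pS n ℓ (gvec n ℓ j) (k + 1)
      = ∑ k ∈ Finset.range n, pS n ℓ (gvec n ℓ i) k * pS n ℓ (gvec n ℓ j) (k + 1) := by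
  apply Finset.sum_subset
  · intro k hk
    simp only [Finset.mem_Icc] at hk
    simp only [Finset.mem_range]
    omega
  · intro k hk hk'
    simp only [Finset.mem_range] at hk
    simp only [Finset.mem_Icc, not_and_or, not_le] at hk'
    rcases hk' with h | h
    · have : k = 0 := by omega
      subst this
      simp [pS]
    · have : k = n - 1 := by omega
      subst this
      have h2 : n - 1 + 1 = n := by omega
      rw [h2, pS_gvec_n, mul_zero]

lemma collapse (a : Fin n → ZMod ℓ) (c : Fin n) :
    ∑ k ∈ Finset.range n, pS n ℓ a k * (Pi.single c 1 : Fin n → ZMod ℓ) ((k : Fin n))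
      = pS n ℓ a (c : ℕ) := by
  rw [Finset.sum_eq_single (c : ℕ)]
  · rw [Fin.cast_val_eq_self, Pi.single_eq_same, mul_one]
  · intro k hk hne
    have hkn : k < n := Finset.mem_range.mp hk
    have hc : ((k : Fin n)) ≠ c := by
      intro h
      exact hne (by rw [← Fin.val_cast_of_lt hkn, h])
    rw [Pi.single_eq_of_ne hc, mul_zero]
  · intro h; exact absurd (Finset.mem_range.mpr c.isLt) h

lemma sum_single (c : Fin n) (k : ℕ) (hk : k ≤ n) :
    ∑ m ∈ Finset.range k, (Pi.single c 1 : Fin n → ZMod ℓ) ((m : Fin n))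
      = if (c : ℕ) < k then 1 else 0 := by
  by_cases h : (c : ℕ) < k
  · rw [if_pos h, Finset.sum_eq_single (c : ℕ)]
    · rw [Fin.cast_val_eq_self, Pi.single_eq_same]
    · intro m hm hne
      have hmn : m < n := lt_of_lt_of_le (Finset.mem_range.mp hm) hk
      have hc : ((m : Fin n)) ≠ c := by
        intro hcc
        exact hne (by rw [← Fin.val_cast_of_lt hmn, hcc])
      exact Pi.single_eq_of_ne hc _
    · intro hc; exact absurd (Finset.mem_range.mpr h) hc
  · rw [if_neg h]
    apply Finset.sum_eq_zero
    intro m hm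
    have hmk : m < k := Finset.mem_range.mp hm
    have hmn : m < n := lt_of_lt_of_le hmk hk
    have hc : ((m : Fin n)) ≠ c := by
      intro hcc
      apply h
      have : m = (c : ℕ) := by rw [← Fin.val_cast_of_lt hmn, hcc]
      omega
    exact Pi.single_eq_of_ne hc _

lemma pS_gvec (i : Fin n) (k : ℕ) (hk : k ≤ n) :
    pS n ℓ (gvec n ℓ i) k
      = (if (i : ℕ) < k then 1 else 0) - (if ((i + 1 : Fin n) : ℕ) < k then (1 : ZMod ℓ) else 0) := by
  unfold pS gvec
  simp only [Pi.sub_apply, Fin.ofNat_eq_cast]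
  rw [Finset.sum_sub_distrib, sum_single n ℓ _ _ hk, sum_single n ℓ _ _ hk]

lemma val_add_one (hn : 3 ≤ n) (i : Fin n) :
    ((i + 1 : Fin n) : ℕ) = (i : ℕ) + 1 ∧ (i : ℕ) + 1 < n ∨
      ((i + 1 : Fin n) : ℕ) = 0 ∧ (i : ℕ) + 1 = n := by
  have h1 : ((1 : Fin n) : ℕ) = 1 := by
    rw [Fin.val_one']
    exact Nat.mod_eq_of_lt (by omega)
  have hadd : ((i + 1 : Fin n) : ℕ) = ((i : ℕ) + 1) % n := by
    rw [Fin.val_add, h1]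
  rcases Nat.lt_or_ge ((i : ℕ) + 1) n with h | h
  · left
    exact ⟨by rw [hadd, Nat.mod_eq_of_lt h], h⟩
  · right
    have hin : (i : ℕ) + 1 = n := by have := i.isLt; omega
    exact ⟨by rw [hadd, hin, Nat.mod_self], hin⟩

lemma itez (p : Prop) [Decidable p] :
    (if p then (1 : ZMod ℓ) else 0) = (((if p then (1 : ℤ) else 0) : ℤ) : ZMod ℓ) := by
  split_ifs <;> simp

set_option maxHeartbeats 4000000 in
set_option maxHeartbeats 4000000 in
lemma key (hn : 3 ≤ n) (i j : Fin n) :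
    (∑ k ∈ Finset.Icc 1 (n - 2), pS n ℓ (gvec n ℓ i) k * pS n ℓ (gvec n ℓ j) (k + 1))
        + gvec n ℓ i (j + 1)
      = (∑ k ∈ Finset.Icc 1 (n - 2), pS n ℓ (gvec n ℓ j) k * pS n ℓ (gvec n ℓ i) (k + 1))
        + gvec n ℓ j (i + 1) := by
  rw [Bil_ext n ℓ hn i j, Bil_ext n ℓ hn j i]
  have hsucc : ∀ (a : Fin n → ZMod ℓ) (k : ℕ), pS n ℓ a (k + 1) = pS n ℓ a k + a ((k : Fin n)) :=
    fun a k => Finset.sum_range_succ _ _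
  simp only [hsucc, mul_add, Finset.sum_add_distrib]
  have hc : ∑ k ∈ Finset.range n, pS n ℓ (gvec n ℓ j) k * pS n ℓ (gvec n ℓ i) k
      = ∑ k ∈ Finset.range n, pS n ℓ (gvec n ℓ i) k * pS n ℓ (gvec n ℓ j) k :=
    Finset.sum_congr rfl fun k _ => mul_comm _ _
  rw [hc]
  have hg : ∀ a b : Fin n,
      ∑ k ∈ Finset.range n, pS n ℓ (gvec n ℓ a) k * gvec n ℓ b ((k : Fin n))
        = pS n ℓ (gvec n ℓ a) (b : ℕ) - pS n ℓ (gvec n ℓ a) ((b + 1 : Fin n) : ℕ) := by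
    intro a b
    have hb : ∀ k : ℕ, gvec n ℓ b ((k : Fin n))
        = (Pi.single b 1 : Fin n → ZMod ℓ) ((k : Fin n))
          - (Pi.single (b + 1) 1 : Fin n → ZMod ℓ) ((k : Fin n)) :=
      fun k => rfl
    simp only [hb, mul_sub, Finset.sum_sub_distrib, collapse]
  rw [hg i j, hg j i]
  rw [pS_gvec n ℓ i (j : ℕ) (le_of_lt j.isLt), pS_gvec n ℓ i ((j + 1 : Fin n) : ℕ) (le_of_lt (j + 1).isLt),
    pS_gvec n ℓ j (i : ℕ) (le_of_lt i.isLt), pS_gvec n ℓ j ((i + 1 : Fin n) : ℕ) (le_of_lt (i + 1).isLt)]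
  have hgi : gvec n ℓ i (j + 1)
      = (if ((j + 1 : Fin n) : ℕ) = (i : ℕ) then (1 : ZMod ℓ) else 0)
        - (if ((j + 1 : Fin n) : ℕ) = ((i + 1 : Fin n) : ℕ) then 1 else 0) := by
    show (Pi.single i 1 : Fin n → ZMod ℓ) (j + 1) - (Pi.single (i + 1) 1 : Fin n → ZMod ℓ) (j + 1) = _
    rw [Pi.single_apply, Pi.single_apply]
    simp only [Fin.ext_iff]
  have hgj : gvec n ℓ j (i + 1)
      = (if ((i + 1 : Fin n) : ℕ) = (j : ℕ) then (1 : ZMod ℓ) else 0)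
        - (if ((i + 1 : Fin n) : ℕ) = ((j + 1 : Fin n) : ℕ) then 1 else 0) := by
    show (Pi.single j 1 : Fin n → ZMod ℓ) (i + 1) - (Pi.single (j + 1) 1 : Fin n → ZMod ℓ) (i + 1) = _
    rw [Pi.single_apply, Pi.single_apply]
    simp only [Fin.ext_iff]
  rw [hgi, hgj, add_assoc, add_assoc]
  congr 1
  have hA := val_add_one n hn i
  have hB := val_add_one n hn j
  have hu := i.isLt
  have hv := j.isLt
  simp only [itez ℓ, ← Int.cast_sub, ← Int.cast_add]
  exact congrArg _ (by split_ifs <;> omega)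

lemma sigma_mk (p q : Fin n → ℤ) (g h : G n ℓ) :
    sigma n ℓ ζ ((p, g) : M n ℓ) ((q, h) : M n ℓ)
      = coc n ℓ ζ (g : Fin n → ZMod ℓ) (h : Fin n → ZMod ℓ) * chi n ℓ ζ (g : Fin n → ZMod ℓ) q :=
  rfl

lemma coc_zero_right (a : Fin n → ZMod ℓ) : coc n ℓ ζ a 0 = 1 := by
  simp [coc, pS, zp]

lemma chi_single (v : Fin n → ZMod ℓ) (c : Fin n) :
    chi n ℓ ζ v (Pi.single c 1) = zp ℓ ζ (v c) := by
  unfold chi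
  congr 1
  rw [Finset.sum_eq_single c]
  · rw [Pi.single_eq_same]; norm_num
  · intro m _ hm
    rw [Pi.single_eq_of_ne hm]; norm_num
  · intro h; exact absurd (Finset.mem_univ c) h

lemma chi_neg_single (v : Fin n → ZMod ℓ) (c : Fin n) :
    chi n ℓ ζ v (-Pi.single c 1) = zp ℓ ζ (-v c) := by
  unfold chi
  congr 1
  rw [Finset.sum_eq_single c]
  · rw [Pi.neg_apply, Pi.single_eq_same]; push_cast; ring
  · intro m _ hm
    rw [Pi.neg_apply, Pi.single_eq_of_ne hm]; norm_num
  · intro h; exact absurd (Finset.mem_univ c) h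

lemma gelt_coe (i : Fin n) : ((gelt n ℓ i : G n ℓ) : Fin n → ZMod ℓ) = gvec n ℓ i := rfl

lemma sigma_ba (i c : Fin n) :
    sigma n ℓ ζ ((-Pi.single (i + 1) 1, gelt n ℓ i) : M n ℓ) ((Pi.single c 1, 0) : M n ℓ)
      = zp ℓ ζ (gvec n ℓ i c) := by
  rw [sigma_mk, gelt_coe, ZeroMemClass.coe_zero, coc_zero_right, one_mul, chi_single]

lemma sigma_bb (h1 : ζ ^ ℓ = 1) (i j : Fin n) :
    sigma n ℓ ζ ((-Pi.single (i + 1) 1, gelt n ℓ i) : M n ℓ)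
        ((-Pi.single (j + 1) 1, gelt n ℓ j) : M n ℓ)
      = zp ℓ ζ (-((∑ k ∈ Finset.Icc 1 (n - 2),
            pS n ℓ (gvec n ℓ i) k * pS n ℓ (gvec n ℓ j) (k + 1)) + gvec n ℓ i (j + 1))) := by
  rw [sigma_mk, gelt_coe, gelt_coe, chi_neg_single, coc, ← zp_add ℓ ζ h1, neg_add]

lemma sigma_bb_symm (h1 : ζ ^ ℓ = 1) (hn : 3 ≤ n) (i j : Fin n) :
    sigma n ℓ ζ ((-Pi.single (j + 1) 1, gelt n ℓ j) : M n ℓ)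
        ((-Pi.single (i + 1) 1, gelt n ℓ i) : M n ℓ)
      = sigma n ℓ ζ ((-Pi.single (i + 1) 1, gelt n ℓ i) : M n ℓ)
        ((-Pi.single (j + 1) 1, gelt n ℓ j) : M n ℓ) := by
  rw [sigma_bb n ℓ ζ h1, sigma_bb n ℓ ζ h1, key n ℓ hn i j]

lemma Asub_mul (a b c : A n ℓ) : (a - b) * c = a * c - b * c :=
  LinearMap.ext fun _ => rfl

lemma Amul_sub (a b c : A n ℓ) : a * (b - c) = a * b - a * c :=
  LinearMap.ext fun x => map_sub a _ _

lemma Asmul_mul (s : ℂ) (a b : A n ℓ) : (s • a) * b = s • (a * b) :=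
  LinearMap.ext fun _ => rfl

lemma Amul_smul (s : ℂ) (a b : A n ℓ) : a * (s • b) = s • (a * b) :=
  LinearMap.ext fun x => map_smul a s _

lemma comm_gen (h1 : ζ ^ ℓ = 1) (c d : ℂ) (p q r s : M n ℓ)
    (h2 : ∀ x, sigma n ℓ ζ p x = 1) (h3 : ∀ x, sigma n ℓ ζ q x = 1)
    (hbb : sigma n ℓ ζ s r = sigma n ℓ ζ r s) :
    (Top n ℓ ζ p - c • Top n ℓ ζ r) * (Top n ℓ ζ q - d • Top n ℓ ζ s)
      - (Top n ℓ ζ q - d • Top n ℓ ζ s) * (Top n ℓ ζ p - c • Top n ℓ ζ r)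
      = (d * (sigma n ℓ ζ s p - 1)) • Top n ℓ ζ (p + s)
        + (c * (1 - sigma n ℓ ζ r q)) • Top n ℓ ζ (q + r) := by
  simp only [Asub_mul, Amul_sub, Asmul_mul, Amul_smul, Top_mul n ℓ ζ h1, smul_smul,
    h2, h3, one_smul]
  rw [hbb, add_comm q p, add_comm s p, add_comm s r, add_comm r q]
  module

lemma Yfull_eq (h1 : ζ ^ ℓ = 1) (t : Fin n → ℂ) (i : Fin n) :
    Yfull n ℓ ζ t i
      = Top n ℓ ζ ((Pi.single i 1, 0) : M n ℓ)
        - (ζ * t i / (ζ - 1)) • Top n ℓ ζ ((-Pi.single (i + 1) 1, gelt n ℓ i) : M n ℓ) := by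
  unfold Yfull Ygen Yinv Uy
  rw [Top_mul n ℓ ζ h1, sigma_fst n ℓ ζ h1, one_smul,
    show ((-Pi.single (i + 1) 1, (0 : G n ℓ)) : M n ℓ) + ((0, gelt n ℓ i) : M n ℓ)
        = ((-Pi.single (i + 1) 1, gelt n ℓ i) : M n ℓ) from by
      rw [Prod.mk_add_mk, add_zero, zero_add]]

end Aux

end TGHA

open TGHA in
/-- The elements `Y_i = y_i - (ζ t_i/(ζ-1)) y_{i+1}⁻¹ g_i` of
`ℂ[y₁^±,…,y_n^±] #_α G` satisfy `Y_i Y_{i+1} - Y_{i+1} Y_i = t_i g_i` for all `i`, and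
`Y_i Y_j - Y_j Y_i = 0` for all `i, j` with `|i-j| ∉ {1, n-1}`. -/
theorem statement14 (n ℓ : ℕ) [NeZero n] (hn : 3 ≤ n) (hℓ : 2 ≤ ℓ)
    (ζ : ℂ) (hζ : IsPrimitiveRoot ζ ℓ) (t : Fin n → ℂ) :
    (∀ i : Fin n,
      Yfull n ℓ ζ t i * Yfull n ℓ ζ t (i + 1) - Yfull n ℓ ζ t (i + 1) * Yfull n ℓ ζ t i =
        t i • Uy n ℓ ζ (gelt n ℓ i)) ∧
    ∀ i j : Fin n, j ≠ i + 1 → i ≠ j + 1 →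
      Yfull n ℓ ζ t i * Yfull n ℓ ζ t j - Yfull n ℓ ζ t j * Yfull n ℓ ζ t i = 0 := by
  haveI : NeZero ℓ := ⟨by omega⟩
  have h1 : ζ ^ ℓ = 1 := hζ.pow_eq_one
  have hζ0 : ζ ≠ 0 := by
    intro h
    rw [h, zero_pow (by omega : ℓ ≠ 0)] at h1
    exact zero_ne_one h1
  have hζ1 : ζ ≠ 1 := hζ.ne_one hℓ
  have hζs : ζ - 1 ≠ 0 := sub_ne_zero.mpr hζ1
  have hz1 : zp ℓ ζ 1 = ζ := by
    haveI : Fact (1 < ℓ) := ⟨hℓ⟩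
    rw [zp, ZMod.val_one, pow_one]
  have hzmul : ζ * zp ℓ ζ (-1 : ZMod ℓ) = 1 := by
    have h2 := (zp_add ℓ ζ h1 1 (-1)).symm
    rw [hz1] at h2
    rw [h2]
    simp [zp]
  have hzneg : zp ℓ ζ (-1 : ZMod ℓ) = ζ⁻¹ := (inv_eq_of_mul_eq_one_right hzmul).symm
  constructor
  · intro i
    have hv1 := val_add_one n hn i
    have hv2 := val_add_one n hn (i + 1)
    have hA : (i + 1 : Fin n) ≠ i := by
      rw [Fin.ne_iff_vne]
      rcases hv1 with ⟨e, l⟩ | ⟨e, l⟩ <;> omega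
    have hB : i ≠ i + 1 + 1 := by
      rw [Fin.ne_iff_vne]
      have := i.isLt
      rcases hv1 with ⟨e1, l1⟩ | ⟨e1, l1⟩ <;> rcases hv2 with ⟨e2, l2⟩ | ⟨e2, l2⟩ <;> omega
    have hσsp : sigma n ℓ ζ ((-Pi.single (i + 1 + 1) 1, gelt n ℓ (i + 1)) : M n ℓ)
        ((Pi.single i 1, 0) : M n ℓ) = 1 := by
      rw [sigma_ba]
      have hg : gvec n ℓ (i + 1) i = 0 := by
        show (Pi.single (i + 1) 1 : Fin n → ZMod ℓ) i
            - (Pi.single (i + 1 + 1) 1 : Fin n → ZMod ℓ) i = 0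
        rw [Pi.single_eq_of_ne hA.symm, Pi.single_eq_of_ne hB]
        exact sub_zero 0
      rw [hg, zp_zero]
    have hσrq : sigma n ℓ ζ ((-Pi.single (i + 1) 1, gelt n ℓ i) : M n ℓ)
        ((Pi.single (i + 1) 1, 0) : M n ℓ) = zp ℓ ζ (-1 : ZMod ℓ) := by
      rw [sigma_ba]
      have hg : gvec n ℓ i (i + 1) = -1 := by
        show (Pi.single i 1 : Fin n → ZMod ℓ) (i + 1)
            - (Pi.single (i + 1) 1 : Fin n → ZMod ℓ) (i + 1) = -1
        rw [Pi.single_eq_of_ne hA, Pi.single_eq_same, zero_sub]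
      rw [hg]
    rw [Yfull_eq n ℓ ζ h1, Yfull_eq n ℓ ζ h1,
      comm_gen n ℓ ζ h1 (ζ * t i / (ζ - 1)) (ζ * t (i + 1) / (ζ - 1)) _ _ _ _
        (fun x => sigma_fst n ℓ ζ h1 (Pi.single i 1) x)
        (fun x => sigma_fst n ℓ ζ h1 (Pi.single (i + 1) 1) x)
        (sigma_bb_symm n ℓ ζ h1 hn i (i + 1)),
      hσsp, hσrq, hzneg]
    rw [show ((Pi.single (i + 1) 1, (0 : G n ℓ)) : M n ℓ)
          + ((-Pi.single (i + 1) 1, gelt n ℓ i) : M n ℓ)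
          = (((0 : Fin n → ℤ), gelt n ℓ i) : M n ℓ) from by
        rw [Prod.mk_add_mk, zero_add, add_neg_cancel]]
    rw [show ζ * t i / (ζ - 1) * (1 - ζ⁻¹) = t i from by field_simp]
    rw [sub_self, mul_zero, zero_smul, zero_add]
    rfl
  · intro i j hji hij
    by_cases hij0 : i = j
    · subst hij0
      exact LinearMap.ext fun x => sub_self _
    have hg1 : gvec n ℓ j i = 0 := by
      show (Pi.single j 1 : Fin n → ZMod ℓ) i - (Pi.single (j + 1) 1 : Fin n → ZMod ℓ) i = 0
      rw [Pi.single_eq_of_ne hij0, Pi.single_eq_of_ne hij]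
      exact sub_zero 0
    have hg2 : gvec n ℓ i j = 0 := by
      show (Pi.single i 1 : Fin n → ZMod ℓ) j - (Pi.single (i + 1) 1 : Fin n → ZMod ℓ) j = 0
      rw [Pi.single_eq_of_ne (Ne.symm hij0), Pi.single_eq_of_ne hji]
      exact sub_zero 0
    rw [Yfull_eq n ℓ ζ h1, Yfull_eq n ℓ ζ h1,
      comm_gen n ℓ ζ h1 (ζ * t i / (ζ - 1)) (ζ * t j / (ζ - 1)) _ _ _ _
        (fun x => sigma_fst n ℓ ζ h1 (Pi.single i 1) x)
        (fun x => sigma_fst n ℓ ζ h1 (Pi.single j 1) x)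
        (sigma_bb_symm n ℓ ζ h1 hn i j),
      sigma_ba, sigma_ba, hg1, hg2, zp_zero]
    simp
end
end

section
/- Suppose n = 3. In H, setting φ_i = x_i g_{i+1} for i = 1, 2, 3 (subscripts mod 3), one has φ_i φ_{i+1} − ζ φ_{i+1} φ_i = ζ t_i for all i. -/
/-!
Common setup for the twisted graded Hecke algebra associated to the homocyclic
group `G ≅ (ℤ/ℓℤ)^{n-1}` (Gan–Highfield, "Center of twisted graded Hecke
algebras for homocyclic groups").

All indices are 0-based: the paper's `x_i, g_i, t_i, τ_i` (for `i = 1, …, n`)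
correspond to index `i - 1 : Fin n` here; subscripts are taken mod `n` via the
(wrap-around) addition of `Fin n`.
-/

noncomputable section

open TGHA

section Helpers

variable (ℓ : ℕ) [NeZero ℓ] (ζ : ℂ) (t : Fin 3 → ℂ)

lemma TGHA.ug_mul (g h : G 3 ℓ) :
    ug 3 ℓ ζ t g * ug 3 ℓ ζ t h = coc 3 ℓ ζ g.1 h.1 • ug 3 ℓ ζ t (g + h) := by
  have := RingQuot.mkAlgHom_rel ℂ (Rel.grp (n := 3) (ℓ := ℓ) (ζ := ζ) (t := t) g h)
  rw [map_mul, map_smul] at this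
  exact this

lemma TGHA.ug_zero : ug 3 ℓ ζ t 0 = 1 := by
  have := RingQuot.mkAlgHom_rel ℂ (Rel.one (n := 3) (ℓ := ℓ) (ζ := ζ) (t := t))
  rw [map_one] at this
  exact this

lemma TGHA.ug_x (g : G 3 ℓ) (i : Fin 3) :
    ug 3 ℓ ζ t g * xx 3 ℓ ζ t i = zp ℓ ζ (g.1 i) • (xx 3 ℓ ζ t i * ug 3 ℓ ζ t g) := by
  have := RingQuot.mkAlgHom_rel ℂ (Rel.gx (n := 3) (ℓ := ℓ) (ζ := ζ) (t := t) g i)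
  rw [map_mul, map_smul, map_mul] at this
  exact this

lemma TGHA.hecke (i : Fin 3) :
    xx 3 ℓ ζ t i * xx 3 ℓ ζ t (i + 1) - xx 3 ℓ ζ t (i + 1) * xx 3 ℓ ζ t i
      = t i • ug 3 ℓ ζ t (gelt 3 ℓ i) := by
  have := RingQuot.mkAlgHom_rel ℂ (Rel.hecke (n := 3) (ℓ := ℓ) (ζ := ζ) (t := t) i)
  rw [map_sub, map_mul, map_mul, map_smul] at this
  exact this

lemma TGHA.phi_prod (g h : G 3 ℓ) (i j : Fin 3) :
    (xx 3 ℓ ζ t i * ug 3 ℓ ζ t g) * (xx 3 ℓ ζ t j * ug 3 ℓ ζ t h)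
      = (zp ℓ ζ (g.1 j) * coc 3 ℓ ζ g.1 h.1) •
        (xx 3 ℓ ζ t i * xx 3 ℓ ζ t j * ug 3 ℓ ζ t (g + h)) := by
  calc (xx 3 ℓ ζ t i * ug 3 ℓ ζ t g) * (xx 3 ℓ ζ t j * ug 3 ℓ ζ t h)
      = xx 3 ℓ ζ t i * (ug 3 ℓ ζ t g * xx 3 ℓ ζ t j) * ug 3 ℓ ζ t h := by
        rw [mul_assoc, mul_assoc, mul_assoc]
    _ = zp ℓ ζ (g.1 j) • (xx 3 ℓ ζ t i * xx 3 ℓ ζ t j * (ug 3 ℓ ζ t g * ug 3 ℓ ζ t h)) := by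
        rw [TGHA.ug_x]
        simp only [mul_smul_comm, smul_mul_assoc, mul_assoc]
    _ = (zp ℓ ζ (g.1 j) * coc 3 ℓ ζ g.1 h.1) •
        (xx 3 ℓ ζ t i * xx 3 ℓ ζ t j * ug 3 ℓ ζ t (g + h)) := by
        rw [TGHA.ug_mul, mul_smul_comm, smul_smul]

end Helpers


section Scalars

variable (ℓ : ℕ) [NeZero ℓ] (ζ : ℂ)

lemma TGHA.zp_zero_s15 : zp ℓ ζ 0 = 1 := by simp [zp]

lemma TGHA.zp_one (hℓ : 2 ≤ ℓ) : zp ℓ ζ 1 = ζ := by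
  haveI : Fact (1 < ℓ) := ⟨by omega⟩
  simp [zp, ZMod.val_one]

lemma TGHA.zp_neg_one_mul (hℓ : 2 ≤ ℓ) (hζ : ζ ^ ℓ = 1) : zp ℓ ζ (-1) * ζ = 1 := by
  obtain ⟨m, rfl⟩ : ∃ m, ℓ = m + 1 := ⟨ℓ - 1, by omega⟩
  rw [zp, show ((-1 : ZMod (m+1)).val) = m from ZMod.val_neg_one m, ← pow_succ]
  exact hζ

lemma TGHA.coc_eval (a b : Fin 3 → ZMod ℓ) :
    coc 3 ℓ ζ a b = zp ℓ ζ (-(a 0 * (b 0 + b 1))) := by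
  have h1 : (3 : ℕ) - 2 = 1 := rfl
  simp [coc, pS, h1, Finset.Icc_self, Finset.sum_range_succ]
  rfl

lemma TGHA.gvec_apply (i j : Fin 3) :
    gvec 3 ℓ i j = (if j = i then 1 else 0) - (if j = i + 1 then 1 else 0) := by
  simp [gvec, Pi.single_apply]

lemma TGHA.gvec_self (j : Fin 3) : gvec 3 ℓ j j = 1 := by
  have h : j ≠ j + 1 := by fin_cases j <;> decide
  simp [TGHA.gvec_apply, h]

lemma TGHA.gvec_succ2 (i : Fin 3) : gvec 3 ℓ (i + 1 + 1) i = -1 := by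
  have h1 : i ≠ i + 1 + 1 := by fin_cases i <;> decide
  have h2 : i = i + 1 + 1 + 1 := by fin_cases i <;> decide
  simp [TGHA.gvec_apply, h1, ← h2]

lemma TGHA.gelt_sum (i : Fin 3) :
    gelt 3 ℓ i + (gelt 3 ℓ (i + 1) + gelt 3 ℓ (i + 1 + 1)) = 0 := by
  apply Subtype.ext
  show gvec 3 ℓ i + (gvec 3 ℓ (i + 1) + gvec 3 ℓ (i + 1 + 1)) = 0
  funext j
  simp only [Pi.add_apply, Pi.zero_apply, TGHA.gvec_apply]
  fin_cases i <;> fin_cases j <;> simp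

lemma TGHA.scalar1 (hℓ : 2 ≤ ℓ) (hζ : ζ ^ ℓ = 1) (i : Fin 3) :
    ζ * (zp ℓ ζ (-1) * coc 3 ℓ ζ (gvec 3 ℓ (i + 1 + 1)) (gvec 3 ℓ (i + 1)))
      = ζ * coc 3 ℓ ζ (gvec 3 ℓ (i + 1)) (gvec 3 ℓ (i + 1 + 1)) := by
  have h := TGHA.zp_neg_one_mul ℓ ζ hℓ hζ
  fin_cases i <;>
    simp [TGHA.coc_eval, TGHA.gvec_apply, TGHA.zp_zero_s15, TGHA.zp_one ℓ ζ hℓ] <;>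
    linear_combination ζ * h

lemma TGHA.scalar2 (hℓ : 2 ≤ ℓ) (hζ : ζ ^ ℓ = 1) (i : Fin 3) (c : ℂ) :
    ζ * coc 3 ℓ ζ (gvec 3 ℓ (i + 1)) (gvec 3 ℓ (i + 1 + 1)) *
      (c * coc 3 ℓ ζ (gvec 3 ℓ i) (gvec 3 ℓ (i + 1) + gvec 3 ℓ (i + 1 + 1)))
      = ζ * c := by
  have h := TGHA.zp_neg_one_mul ℓ ζ hℓ hζ
  fin_cases i <;>
    simp [TGHA.coc_eval, TGHA.gvec_apply, TGHA.zp_zero_s15, TGHA.zp_one ℓ ζ hℓ] <;>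
    linear_combination ζ * c * h

end Scalars

/-- For `n = 3`, setting `φ_i = x_i g_{i+1}` in `H` (subscripts mod 3),
one has `φ_i φ_{i+1} - ζ φ_{i+1} φ_i = ζ t_i` for all `i`. -/
theorem statement15 (ℓ : ℕ) (hℓ : 2 ≤ ℓ) (ζ : ℂ) (hζ : IsPrimitiveRoot ζ ℓ)
    (t : Fin 3 → ℂ) :
    ∀ i : Fin 3,
      (xx 3 ℓ ζ t i * ug 3 ℓ ζ t (gelt 3 ℓ (i + 1))) *
          (xx 3 ℓ ζ t (i + 1) * ug 3 ℓ ζ t (gelt 3 ℓ (i + 1 + 1))) -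
        ζ • ((xx 3 ℓ ζ t (i + 1) * ug 3 ℓ ζ t (gelt 3 ℓ (i + 1 + 1))) *
          (xx 3 ℓ ζ t i * ug 3 ℓ ζ t (gelt 3 ℓ (i + 1)))) =
      (ζ * t i) • (1 : H 3 ℓ ζ t) := by
  haveI : NeZero ℓ := ⟨by omega⟩
  have hζℓ : ζ ^ ℓ = 1 := hζ.pow_eq_one
  intro i
  rw [TGHA.phi_prod, TGHA.phi_prod,
      show gelt 3 ℓ (i+1+1) + gelt 3 ℓ (i+1) = gelt 3 ℓ (i+1) + gelt 3 ℓ (i+1+1) from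
        add_comm _ _,
      smul_smul]
  have hc : ∀ j, (gelt 3 ℓ j).1 = gvec 3 ℓ j := fun j => rfl
  have e1 : (gelt 3 ℓ (i+1)).1 (i+1) = 1 := TGHA.gvec_self ℓ (i+1)
  have e2 : (gelt 3 ℓ (i+1+1)).1 i = -1 := TGHA.gvec_succ2 ℓ i
  rw [e1, e2, TGHA.zp_one ℓ ζ hℓ, hc, hc, TGHA.scalar1 ℓ ζ hℓ hζℓ i,
      ← smul_sub _ (xx 3 ℓ ζ t i * xx 3 ℓ ζ t (i+1) * ug 3 ℓ ζ t (gelt 3 ℓ (i+1) + gelt 3 ℓ (i+1+1))), ← sub_mul, TGHA.hecke, smul_mul_assoc, TGHA.ug_mul,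
      TGHA.gelt_sum, TGHA.ug_zero, hc,
      show ((gelt 3 ℓ (i+1) + gelt 3 ℓ (i+1+1) : G 3 ℓ)).1
          = gvec 3 ℓ (i+1) + gvec 3 ℓ (i+1+1) from rfl,
      smul_smul, smul_smul]
  congr 1
  rw [mul_assoc]
  exact TGHA.scalar2 ℓ ζ hℓ hζℓ i (t i)
end
end
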